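/- arXiv:1012.0197 — 2 statements merged into one kernel-verified Lean document; each statement's English description precedes it below -/
import Mathlib

section
/- Consider the missing-data construction: given a biadjacency matrix M_b ∈ {0,1}^{s×t} with Z zero entries enumerated as (i₁,j₁),…,(i_Z,j_Z), define M ∈ ℝ^{(s+Z)×(t+Z)} with upper-left block M_b, lower-right block d·I_Z, and zero blocks elsewhere; define W ∈ {0,1}^{(s+Z)×(t+Z)} with upper-left block all ones, lower-right block I_Z, upper-right block B₁, lower-left block B₂, where B₁(i,k)=1 iff i = i_k and B₂(k,j)=1 iff j = j_k. Then for any d > 1, the infimum p* = inf_{u,v} ‖M − uv^T‖_W² satisfies p* ≤ |E| − |E*|, where |E| is the number of ones in M_b and |E*| the maximum biclique size of M_b. -/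
def IsBiclique {s t : ℕ} (Mb : Matrix (Fin s) (Fin t) ℝ)
    (I : Finset (Fin s)) (J : Finset (Fin t)) : Prop :=
  ∀ i ∈ I, ∀ j ∈ J, Mb i j = 1

/-- Data matrix of the missing-data reduction: upper-left block `Mb`,
lower-right block `d·I_Z`, zero blocks elsewhere. -/
def mdM {s t Z : ℕ} (Mb : Matrix (Fin s) (Fin t) ℝ) (d : ℝ) :
    Matrix (Fin s ⊕ Fin Z) (Fin t ⊕ Fin Z) ℝ :=
  fun x y =>
    match x, y with
    | Sum.inl i, Sum.inl j => Mb i j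
    | Sum.inl _, Sum.inr _ => 0
    | Sum.inr _, Sum.inl _ => 0
    | Sum.inr k, Sum.inr k' => if k = k' then d else 0

/-- Weight matrix of the missing-data reduction: all-ones upper-left block,
identity lower-right block, and pattern blocks `B₁`, `B₂` determined by the
enumeration `e` of the zero entries of `Mb`. -/
def mdW {s t Z : ℕ} (e : Fin Z → Fin s × Fin t) :
    Matrix (Fin s ⊕ Fin Z) (Fin t ⊕ Fin Z) ℝ :=
  fun x y =>
    match x, y with
    | Sum.inl _, Sum.inl _ => 1
    | Sum.inl i, Sum.inr k => if (e k).1 = i then 1 else 0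
    | Sum.inr k, Sum.inl j => if (e k).2 = j then 1 else 0
    | Sum.inr k, Sum.inr k' => if k = k' then 1 else 0

theorem stmt_13 {s t Z : ℕ} (Mb : Matrix (Fin s) (Fin t) ℝ)
    (hMb : ∀ i j, Mb i j = 0 ∨ Mb i j = 1)
    (e : Fin Z → Fin s × Fin t) (he_inj : Function.Injective e)
    (he_enum : ∀ p : Fin s × Fin t, Mb p.1 p.2 = 0 ↔ p ∈ Set.range e)
    (E : ℝ) (hE : E = ∑ i, ∑ j, Mb i j)
    (Estar : ℕ)
    (hEstar_ex : ∃ (I : Finset (Fin s)) (J : Finset (Fin t)),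
      IsBiclique Mb I J ∧ I.card * J.card = Estar)
    (hEstar_max : ∀ (I : Finset (Fin s)) (J : Finset (Fin t)),
      IsBiclique Mb I J → I.card * J.card ≤ Estar)
    (d : ℝ) (hd : 1 < d) :
    sInf {x : ℝ | ∃ (u : Fin s ⊕ Fin Z → ℝ) (v : Fin t ⊕ Fin Z → ℝ),
        x = ∑ i, ∑ j, mdW e i j * (mdM Mb d i j - u i * v j) ^ 2} ≤
      E - Estar := by
  obtain ⟨I, J, hB, hIJ⟩ := hEstar_ex
  have hw : ∀ i j, (0:ℝ) ≤ mdW e i j := by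
    intro i j
    cases i <;> cases j <;> simp only [mdW] <;> first | (split_ifs <;> norm_num) | norm_num
  have hbdd : BddBelow {x : ℝ | ∃ (u : Fin s ⊕ Fin Z → ℝ) (v : Fin t ⊕ Fin Z → ℝ),
      x = ∑ i, ∑ j, mdW e i j * (mdM Mb d i j - u i * v j) ^ 2} := by
    refine ⟨0, ?_⟩
    rintro x ⟨u, v, rfl⟩
    apply Finset.sum_nonneg
    intro i _
    apply Finset.sum_nonneg
    intro j _
    exact mul_nonneg (hw i j) (sq_nonneg _)
  have hne : ({x : ℝ | ∃ (u : Fin s ⊕ Fin Z → ℝ) (v : Fin t ⊕ Fin Z → ℝ),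
      x = ∑ i, ∑ j, mdW e i j * (mdM Mb d i j - u i * v j) ^ 2}).Nonempty :=
    ⟨_, 0, 0, rfl⟩
  rw [Real.sInf_le_iff hbdd hne]
  intro ε hε
  -- choose the small parameter c
  set c : ℝ := Real.sqrt (ε / (2 * Z + 2)) with hc_def
  have hden : (0:ℝ) < 2 * Z + 2 := by positivity
  have hc_pos : 0 < c := Real.sqrt_pos.mpr (by positivity)
  have hc_sq : c ^ 2 = ε / (2 * Z + 2) := Real.sq_sqrt (by positivity)
  have hc_ne : c ≠ 0 := ne_of_gt hc_pos
  -- the candidate factors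
  set u : Fin s ⊕ Fin Z → ℝ := fun x =>
    match x with
    | Sum.inl i => if i ∈ I then 1 else 0
    | Sum.inr k => if (e k).2 ∈ J then c else d / c with hu_def
  set v : Fin t ⊕ Fin Z → ℝ := fun y =>
    match y with
    | Sum.inl j => if j ∈ J then 1 else 0
    | Sum.inr k => if (e k).2 ∈ J then d / c else c with hv_def
  have huv : ∀ k : Fin Z, u (Sum.inr k) * v (Sum.inr k) = d := by
    intro k
    simp only [hu_def, hv_def]
    split_ifs <;> field_simp
  have hkey : ∀ k : Fin Z, (e k).2 ∈ J → (e k).1 ∉ I := by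
    intro k hk hkI
    have h0 : Mb (e k).1 (e k).2 = 0 := (he_enum (e k)).mpr ⟨k, rfl⟩
    have h1 : Mb (e k).1 (e k).2 = 1 := hB _ hkI _ hk
    norm_num [h0] at h1
  refine ⟨_, ⟨u, v, rfl⟩, ?_⟩
  -- split the sum into four blocks
  rw [Fintype.sum_sum_type]
  simp only [Fintype.sum_sum_type]
  rw [Finset.sum_add_distrib, Finset.sum_add_distrib]
  -- block A
  have hA : ∑ i : Fin s, ∑ j : Fin t,
      mdW e (Sum.inl i) (Sum.inl j) * (mdM (Z := Z) Mb d (Sum.inl i) (Sum.inl j) - u (Sum.inl i) * v (Sum.inl j)) ^ 2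
      = E - Estar := by
    have hterm : ∀ i j, mdW e (Sum.inl i) (Sum.inl j) *
        (mdM (Z := Z) Mb d (Sum.inl i) (Sum.inl j) - u (Sum.inl i) * v (Sum.inl j)) ^ 2
        = Mb i j - (if i ∈ I then (1:ℝ) else 0) * (if j ∈ J then (1:ℝ) else 0) := by
      intro i j
      simp only [mdW, mdM, hu_def, hv_def, one_mul]
      by_cases hi : i ∈ I <;> by_cases hj : j ∈ J <;> simp [hi, hj]
      · have := hB i hi j hj; rw [this]; ring
      all_goals rcases hMb i j with h | h <;> simp [h]
    simp only [hterm]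
    rw [hE]
    have : ∑ i : Fin s, ∑ j : Fin t,
        (Mb i j - (if i ∈ I then (1:ℝ) else 0) * (if j ∈ J then (1:ℝ) else 0))
        = (∑ i : Fin s, ∑ j : Fin t, Mb i j)
          - (∑ i : Fin s, if i ∈ I then (1:ℝ) else 0) * (∑ j : Fin t, if j ∈ J then (1:ℝ) else 0) := by
      rw [Finset.sum_mul_sum]
      rw [← Finset.sum_sub_distrib]
      congr 1; ext i
      rw [← Finset.sum_sub_distrib]
    rw [this]
    have hI : (∑ i : Fin s, if i ∈ I then (1:ℝ) else 0) = I.card := by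
      simp [Finset.sum_ite_mem]
    have hJ : (∑ j : Fin t, if j ∈ J then (1:ℝ) else 0) = J.card := by
      simp [Finset.sum_ite_mem]
    rw [hI, hJ, ← hIJ]
    push_cast
    ring
  -- block B
  have hBb : ∑ i : Fin s, ∑ k : Fin Z,
      mdW e (Sum.inl i) (Sum.inr k) * (mdM (Z := Z) Mb d (Sum.inl i) (Sum.inr k) - u (Sum.inl i) * v (Sum.inr k)) ^ 2
      ≤ Z * c ^ 2 := by
    rw [Finset.sum_comm]
    have hinner : ∀ k : Fin Z, ∑ i : Fin s,
        mdW e (Sum.inl i) (Sum.inr k) * (mdM (Z := Z) Mb d (Sum.inl i) (Sum.inr k) - u (Sum.inl i) * v (Sum.inr k)) ^ 2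
        = (0 - u (Sum.inl (e k).1) * v (Sum.inr k)) ^ 2 := by
      intro k
      simp only [mdW, mdM, ite_mul, zero_mul]
      rw [Finset.sum_ite_eq]
      simp
    calc ∑ k : Fin Z, ∑ i : Fin s,
        mdW e (Sum.inl i) (Sum.inr k) * (mdM (Z := Z) Mb d (Sum.inl i) (Sum.inr k) - u (Sum.inl i) * v (Sum.inr k)) ^ 2
        = ∑ k : Fin Z, (0 - u (Sum.inl (e k).1) * v (Sum.inr k)) ^ 2 := by
          exact Finset.sum_congr rfl fun k _ => hinner k
      _ ≤ ∑ _k : Fin Z, c ^ 2 := by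
          apply Finset.sum_le_sum
          intro k _
          by_cases hk : (e k).2 ∈ J
          · have : (e k).1 ∉ I := hkey k hk
            simp [hu_def, this]
            positivity
          · simp only [hu_def, hv_def, if_neg hk]
            by_cases hi : (e k).1 ∈ I <;> simp [hi]
            positivity
      _ = Z * c ^ 2 := by simp [Finset.sum_const, nsmul_eq_mul]
  -- block C
  have hC : ∑ k : Fin Z, ∑ j : Fin t,
      mdW e (Sum.inr k) (Sum.inl j) * (mdM (Z := Z) Mb d (Sum.inr k) (Sum.inl j) - u (Sum.inr k) * v (Sum.inl j)) ^ 2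
      ≤ Z * c ^ 2 := by
    have hinner : ∀ k : Fin Z, ∑ j : Fin t,
        mdW e (Sum.inr k) (Sum.inl j) * (mdM (Z := Z) Mb d (Sum.inr k) (Sum.inl j) - u (Sum.inr k) * v (Sum.inl j)) ^ 2
        = (0 - u (Sum.inr k) * v (Sum.inl (e k).2)) ^ 2 := by
      intro k
      simp only [mdW, mdM, ite_mul, zero_mul]
      rw [Finset.sum_ite_eq]
      simp
    calc ∑ k : Fin Z, ∑ j : Fin t,
        mdW e (Sum.inr k) (Sum.inl j) * (mdM (Z := Z) Mb d (Sum.inr k) (Sum.inl j) - u (Sum.inr k) * v (Sum.inl j)) ^ 2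
        = ∑ k : Fin Z, (0 - u (Sum.inr k) * v (Sum.inl (e k).2)) ^ 2 := by
          exact Finset.sum_congr rfl fun k _ => hinner k
      _ ≤ ∑ _k : Fin Z, c ^ 2 := by
          apply Finset.sum_le_sum
          intro k _
          by_cases hk : (e k).2 ∈ J
          · simp only [hu_def, hv_def, if_pos hk]
            ring_nf
            nlinarith [sq_nonneg c]
          · simp [hv_def, hk]
            positivity
      _ = Z * c ^ 2 := by simp [Finset.sum_const, nsmul_eq_mul]
  -- block D
  have hD : ∑ k : Fin Z, ∑ k' : Fin Z,
      mdW e (Sum.inr k) (Sum.inr k') * (mdM (Z := Z) Mb d (Sum.inr k) (Sum.inr k') - u (Sum.inr k) * v (Sum.inr k')) ^ 2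
      = 0 := by
    apply Finset.sum_eq_zero
    intro k _
    apply Finset.sum_eq_zero
    intro k' _
    by_cases h : k = k'
    · subst h
      simp [mdW, mdM, huv k]
    · simp [mdW, mdM, h]
  rw [hA, hD]
  have hZc : (Z:ℝ) * c ^ 2 + (Z:ℝ) * c ^ 2 < ε := by
    rw [hc_sq]
    have h1 : (Z:ℝ) * (ε / (2 * Z + 2)) + (Z:ℝ) * (ε / (2 * Z + 2))
        = ε * ((2 * Z) / (2 * Z + 2)) := by
      field_simp
      ring
    rw [h1]
    have h2 : (2 * (Z:ℝ)) / (2 * Z + 2) < 1 := (div_lt_one hden).mpr (by linarith)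
    nlinarith
  linarith [hBb, hC]
end

section
/- In the missing-data construction with M_b ∈ {0,1}^{s×t} having |E| ≥ 1 ones and maximum biclique size |E*|, for any 0 < ε ≤ 1 and any d > 8|E|^{7/2}/ε² + |E|^{1/2}, the infimum p* = inf_{u,v} ‖M − uv^T‖_W² satisfies |E| − |E*| − ε < p* ≤ |E| − |E*|. -/
set_option maxHeartbeats 1000000

private lemma decomp {s t Z : ℕ} (Mb : Matrix (Fin s) (Fin t) ℝ) (d : ℝ)
    (e : Fin Z → Fin s × Fin t) (u : Fin s ⊕ Fin Z → ℝ) (v : Fin t ⊕ Fin Z → ℝ) :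
    ∑ i, ∑ j, mdW e i j * (mdM Mb d i j - u i * v j) ^ 2 =
      (∑ i, ∑ j, (Mb i j - u (Sum.inl i) * v (Sum.inl j)) ^ 2)
      + (∑ k, (u (Sum.inl (e k).1) * v (Sum.inr k)) ^ 2)
      + (∑ k, (u (Sum.inr k) * v (Sum.inl (e k).2)) ^ 2)
      + (∑ k, (d - u (Sum.inr k) * v (Sum.inr k)) ^ 2) := by
  rw [Fintype.sum_sum_type]
  have h1 : ∀ i : Fin s, ∑ j, mdW e (Sum.inl i) j * (mdM Mb d (Sum.inl i) j - u (Sum.inl i) * v j) ^ 2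
      = (∑ j, (Mb i j - u (Sum.inl i) * v (Sum.inl j)) ^ 2)
        + ∑ k, (if (e k).1 = i then (u (Sum.inl i) * v (Sum.inr k)) ^ 2 else 0) := by
    intro i
    rw [Fintype.sum_sum_type]
    congr 1
    · simp [mdW, mdM]
    · apply Finset.sum_congr rfl
      intro k _
      simp only [mdW, mdM]
      split <;> simp [neg_sq]
  have h2 : ∀ k : Fin Z, ∑ j, mdW e (Sum.inr k) j * (mdM Mb d (Sum.inr k) j - u (Sum.inr k) * v j) ^ 2
      = (u (Sum.inr k) * v (Sum.inl (e k).2)) ^ 2 + (d - u (Sum.inr k) * v (Sum.inr k)) ^ 2 := by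
    intro k
    rw [Fintype.sum_sum_type]
    congr 1
    · rw [show (u (Sum.inr k) * v (Sum.inl (e k).2)) ^ 2
          = ∑ j, (if (e k).2 = j then (u (Sum.inr k) * v (Sum.inl j)) ^ 2 else 0) by
        rw [Finset.sum_ite_eq]; simp]
      apply Finset.sum_congr rfl
      intro j _
      simp only [mdW, mdM]
      split <;> simp [neg_sq]
    · rw [show (d - u (Sum.inr k) * v (Sum.inr k)) ^ 2
          = ∑ k', (if k = k' then (d - u (Sum.inr k) * v (Sum.inr k')) ^ 2 else 0) by
        rw [Finset.sum_ite_eq]; simp]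
      apply Finset.sum_congr rfl
      intro k' _
      simp only [mdW, mdM]
      split <;> simp
  rw [Finset.sum_congr rfl (fun i _ => h1 i), Finset.sum_congr rfl (fun k _ => h2 k)]
  rw [Finset.sum_add_distrib, Finset.sum_add_distrib]
  have hsw : ∑ i : Fin s, ∑ k : Fin Z, (if (e k).1 = i then (u (Sum.inl i) * v (Sum.inr k)) ^ 2 else 0)
      = ∑ k, (u (Sum.inl (e k).1) * v (Sum.inr k)) ^ 2 := by
    rw [Finset.sum_comm]
    apply Finset.sum_congr rfl
    intro k _; rw [Finset.sum_ite_eq]; simp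
  rw [hsw]
  ring

private lemma mdConstruct {s t Z : ℕ} (Mb : Matrix (Fin s) (Fin t) ℝ)
    (hMb : ∀ i j, Mb i j = 0 ∨ Mb i j = 1)
    (e : Fin Z → Fin s × Fin t)
    (hz : ∀ k, Mb (e k).1 (e k).2 = 0)
    (I : Finset (Fin s)) (J : Finset (Fin t)) (hbic : IsBiclique Mb I J)
    (d : ℝ) (η : ℝ) (hη : 0 < η) :
    ∃ (u : Fin s ⊕ Fin Z → ℝ) (v : Fin t ⊕ Fin Z → ℝ),
      ((∑ i, ∑ j, (Mb i j - u (Sum.inl i) * v (Sum.inl j)) ^ 2)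
      + (∑ k, (u (Sum.inl (e k).1) * v (Sum.inr k)) ^ 2)
      + (∑ k, (u (Sum.inr k) * v (Sum.inl (e k).2)) ^ 2)
      + (∑ k, (d - u (Sum.inr k) * v (Sum.inr k)) ^ 2))
      ≤ ((∑ i, ∑ j, Mb i j) - I.card * J.card) + η := by
  set δ : ℝ := Real.sqrt (η / (2 * Z + 1)) with hδdef
  have hδpos : 0 < δ := Real.sqrt_pos.2 (by positivity)
  have hδsq : δ ^ 2 = η / (2 * Z + 1) := Real.sq_sqrt (by positivity)
  refine ⟨Sum.elim (fun i => if i ∈ I then (1:ℝ) else 0)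
      (fun k => if (e k).2 ∈ J then δ else d / δ),
    Sum.elim (fun j => if j ∈ J then (1:ℝ) else 0)
      (fun k => if (e k).2 ∈ J then d / δ else δ), ?_⟩
  simp only [Sum.elim_inl, Sum.elim_inr]
  have hA : ∑ i, ∑ j, (Mb i j - (if i ∈ I then (1:ℝ) else 0) * (if j ∈ J then (1:ℝ) else 0)) ^ 2
      = (∑ i, ∑ j, Mb i j) - I.card * J.card := by
    have hpt : ∀ i j, (Mb i j - (if i ∈ I then (1:ℝ) else 0) * (if j ∈ J then (1:ℝ) else 0)) ^ 2
        = Mb i j - (if i ∈ I then (1:ℝ) else 0) * (if j ∈ J then (1:ℝ) else 0) := by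
      intro i j
      by_cases hi : i ∈ I <;> by_cases hj : j ∈ J <;>
        simp only [hi, hj, if_true, if_false, mul_one, mul_zero, one_mul, sub_zero]
      · rw [hbic i hi j hj]; norm_num
      all_goals rcases hMb i j with h | h <;> simp [h]
    simp only [hpt, Finset.sum_sub_distrib]
    congr 1
    rw [← Finset.sum_mul_sum]
    simp [Finset.sum_boole, mul_comm]
  have hnI : ∀ k, (e k).2 ∈ J → (e k).1 ∉ I := by
    intro k hJ hI
    have := hbic _ hI _ hJ
    rw [hz k] at this; norm_num at this
  have hB : ∀ k : Fin Z, ((if (e k).1 ∈ I then (1:ℝ) else 0) *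
      (if (e k).2 ∈ J then d / δ else δ)) ^ 2 ≤ δ ^ 2 := by
    intro k
    by_cases hJ : (e k).2 ∈ J
    · simp [hJ, hnI k hJ]; positivity
    · by_cases hI : (e k).1 ∈ I <;> simp [hJ, hI] <;> positivity
  have hC : ∀ k : Fin Z, ((if (e k).2 ∈ J then δ else d / δ) *
      (if (e k).2 ∈ J then (1:ℝ) else 0)) ^ 2 ≤ δ ^ 2 := by
    intro k
    by_cases hJ : (e k).2 ∈ J <;> simp [hJ] <;> positivity
  have hD : ∀ k : Fin Z, (d - (if (e k).2 ∈ J then δ else d / δ) *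
      (if (e k).2 ∈ J then d / δ else δ)) ^ 2 = 0 := by
    intro k
    by_cases hJ : (e k).2 ∈ J <;> simp [hJ] <;> field_simp <;> ring
  calc _ ≤ ((∑ i, ∑ j, Mb i j) - I.card * J.card) + (Z * δ ^ 2) + (Z * δ ^ 2) + 0 := by
        gcongr ?_ + ?_ + ?_ + ?_
        · exact le_of_eq hA
        · calc ∑ k : Fin Z, ((if (e k).1 ∈ I then (1:ℝ) else 0) *
              (if (e k).2 ∈ J then d / δ else δ)) ^ 2 ≤ ∑ _k : Fin Z, δ ^ 2 :=
                Finset.sum_le_sum (fun k _ => hB k)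
          _ = Z * δ ^ 2 := by simp [Finset.sum_const, nsmul_eq_mul]
        · calc ∑ k : Fin Z, ((if (e k).2 ∈ J then δ else d / δ) *
              (if (e k).2 ∈ J then (1:ℝ) else 0)) ^ 2 ≤ ∑ _k : Fin Z, δ ^ 2 :=
                Finset.sum_le_sum (fun k _ => hC k)
          _ = Z * δ ^ 2 := by simp [Finset.sum_const, nsmul_eq_mul]
        · simp only [hD, Finset.sum_const_zero]; exact le_refl 0
    _ ≤ ((∑ i, ∑ j, Mb i j) - I.card * J.card) + η := by
        rw [hδsq]
        have h2 : (0:ℝ) < 2 * (Z:ℝ) + 1 := by positivity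
        have h1 : (Z:ℝ) * (η / (2 * (Z:ℝ) + 1)) + (Z:ℝ) * (η / (2 * (Z:ℝ) + 1)) ≤ η := by
          have h3 : (Z:ℝ) * (η / (2 * (Z:ℝ) + 1)) + (Z:ℝ) * (η / (2 * (Z:ℝ) + 1))
              = η * ((2 * (Z:ℝ)) / (2 * (Z:ℝ) + 1)) := by ring
          rw [h3]
          calc η * ((2 * (Z:ℝ)) / (2 * (Z:ℝ) + 1)) ≤ η * 1 := by
                gcongr
                rw [div_le_one h2]; linarith
            _ = η := mul_one η
        linarith

private lemma key {s t Z : ℕ} (Mb : Matrix (Fin s) (Fin t) ℝ)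
    (hMb : ∀ i j, Mb i j = 0 ∨ Mb i j = 1)
    (e : Fin Z → Fin s × Fin t)
    (he_enum : ∀ p : Fin s × Fin t, Mb p.1 p.2 = 0 ↔ p ∈ Set.range e)
    (Estar : ℕ)
    (hEstar_max : ∀ (I : Finset (Fin s)) (J : Finset (Fin t)),
      IsBiclique Mb I J → I.card * J.card ≤ Estar)
    (q γ β d : ℝ) (hq1 : 1 ≤ q) (hdq : q < d)
    (hγ : γ = q ^ 2 / (d - q)) (hγ1 : γ < 1)
    (hβ0 : 0 < β) (hβsq : β ^ 2 = 2 * q * γ) (hβhalf : β ≤ 1 / 2)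
    (u : Fin s ⊕ Fin Z → ℝ) (v : Fin t ⊕ Fin Z → ℝ)
    (hF : (∑ i, ∑ j, (Mb i j - u (Sum.inl i) * v (Sum.inl j)) ^ 2)
      + (∑ k, (u (Sum.inl (e k).1) * v (Sum.inr k)) ^ 2)
      + (∑ k, (u (Sum.inr k) * v (Sum.inl (e k).2)) ^ 2)
      + (∑ k, (d - u (Sum.inr k) * v (Sum.inr k)) ^ 2) < q ^ 2) :
    (((Finset.univ.filter (fun p : Fin s × Fin t => Mb p.1 p.2 = 1)).card : ℝ)
        - (Estar : ℝ)) * (1 - 2 * β) ≤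
      (∑ i, ∑ j, (Mb i j - u (Sum.inl i) * v (Sum.inl j)) ^ 2)
      + (∑ k, (u (Sum.inl (e k).1) * v (Sum.inr k)) ^ 2)
      + (∑ k, (u (Sum.inr k) * v (Sum.inl (e k).2)) ^ 2)
      + (∑ k, (d - u (Sum.inr k) * v (Sum.inr k)) ^ 2) := by
  set U : Fin s → ℝ := fun i => u (Sum.inl i) with hU
  set V : Fin t → ℝ := fun j => v (Sum.inl j) with hV
  set A := ∑ i, ∑ j, (Mb i j - U i * V j) ^ 2 with hA
  set B := ∑ k, (u (Sum.inl (e k).1) * v (Sum.inr k)) ^ 2 with hB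
  set C := ∑ k, (u (Sum.inr k) * v (Sum.inl (e k).2)) ^ 2 with hC
  set Dg := ∑ k, (d - u (Sum.inr k) * v (Sum.inr k)) ^ 2 with hDg
  have hq0 : 0 < q := by linarith
  have hγ0 : 0 < γ := by rw [hγ]; exact div_pos (by positivity) (by linarith)
  have hA0 : 0 ≤ A := Finset.sum_nonneg fun _ _ => Finset.sum_nonneg fun _ _ => sq_nonneg _
  have hB0 : 0 ≤ B := Finset.sum_nonneg fun _ _ => sq_nonneg _
  have hC0 : 0 ≤ C := Finset.sum_nonneg fun _ _ => sq_nonneg _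
  have hD0 : 0 ≤ Dg := Finset.sum_nonneg fun _ _ => sq_nonneg _
  -- individual term bounds
  have htermA : ∀ i j, (Mb i j - U i * V j) ^ 2 < q ^ 2 := by
    intro i j
    have h1 : (Mb i j - U i * V j) ^ 2 ≤ ∑ j', (Mb i j' - U i * V j') ^ 2 :=
      Finset.single_le_sum (f := fun j' => (Mb i j' - U i * V j') ^ 2)
        (fun _ _ => sq_nonneg _) (Finset.mem_univ j)
    have h2 : ∑ j', (Mb i j' - U i * V j') ^ 2 ≤ A :=
      Finset.single_le_sum (f := fun i => ∑ j', (Mb i j' - U i * V j') ^ 2)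
        (fun _ _ => Finset.sum_nonneg fun _ _ => sq_nonneg _) (Finset.mem_univ i)
    linarith
  have htermB : ∀ k, (u (Sum.inl (e k).1) * v (Sum.inr k)) ^ 2 < q ^ 2 := by
    intro k
    have h1 : (u (Sum.inl (e k).1) * v (Sum.inr k)) ^ 2 ≤ B :=
      Finset.single_le_sum (f := fun k => (u (Sum.inl (e k).1) * v (Sum.inr k)) ^ 2)
        (fun _ _ => sq_nonneg _) (Finset.mem_univ k)
    linarith
  have htermC : ∀ k, (u (Sum.inr k) * v (Sum.inl (e k).2)) ^ 2 < q ^ 2 := by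
    intro k
    have h1 : (u (Sum.inr k) * v (Sum.inl (e k).2)) ^ 2 ≤ C :=
      Finset.single_le_sum (f := fun k => (u (Sum.inr k) * v (Sum.inl (e k).2)) ^ 2)
        (fun _ _ => sq_nonneg _) (Finset.mem_univ k)
    linarith
  have htermD : ∀ k, (d - u (Sum.inr k) * v (Sum.inr k)) ^ 2 < q ^ 2 := by
    intro k
    have h1 : (d - u (Sum.inr k) * v (Sum.inr k)) ^ 2 ≤ Dg :=
      Finset.single_le_sum (f := fun k => (d - u (Sum.inr k) * v (Sum.inr k)) ^ 2)
        (fun _ _ => sq_nonneg _) (Finset.mem_univ k)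
    linarith
  -- bound at zero entries
  have h_zero : ∀ i j, Mb i j = 0 → |U i * V j| ≤ γ := by
    intro i j hij
    obtain ⟨k, hk⟩ := (he_enum (i, j)).1 hij
    have hk1 : (e k).1 = i := by rw [hk]
    have hk2 : (e k).2 = j := by rw [hk]
    have hDk := htermD k
    have hP : d - q < u (Sum.inr k) * v (Sum.inr k) := by nlinarith
    have hBk : |U i * v (Sum.inr k)| ≤ q := by
      have h := htermB k
      rw [hk1] at h
      have h2 : |U i * v (Sum.inr k)| ^ 2 < q ^ 2 := by rwa [sq_abs]
      nlinarith [abs_nonneg (U i * v (Sum.inr k))]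
    have hCk : |u (Sum.inr k) * V j| ≤ q := by
      have h := htermC k
      rw [hk2] at h
      have h2 : |u (Sum.inr k) * V j| ^ 2 < q ^ 2 := by rwa [sq_abs]
      nlinarith [abs_nonneg (u (Sum.inr k) * V j)]
    have habs : |U i * V j| * (u (Sum.inr k) * v (Sum.inr k)) ≤ q * q := by
      have h3 : |U i * V j| * |u (Sum.inr k) * v (Sum.inr k)|
          = |U i * v (Sum.inr k)| * |u (Sum.inr k) * V j| := by
        rw [← abs_mul, ← abs_mul]
        congr 1
        ring
      have h4 : |u (Sum.inr k) * v (Sum.inr k)| = u (Sum.inr k) * v (Sum.inr k) :=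
        abs_of_pos (by linarith)
      rw [← h4, h3]
      exact mul_le_mul hBk hCk (abs_nonneg _) (by linarith [abs_nonneg (U i * v (Sum.inr k))])
    rw [hγ, le_div_iff₀ (by linarith : (0:ℝ) < d - q)]
    have h5 : |U i * V j| * (d - q) ≤ |U i * V j| * (u (Sum.inr k) * v (Sum.inr k)) :=
      mul_le_mul_of_nonneg_left (le_of_lt hP) (abs_nonneg _)
    have h6 : q * q = q ^ 2 := (sq q).symm
    linarith
  -- bound at one entries
  have h_one : ∀ i j, Mb i j = 1 → |U i * V j| ≤ 2 * q := by
    intro i j hij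
    have h := htermA i j
    rw [hij] at h
    rw [abs_le]
    constructor <;> nlinarith
  -- the near-biclique set
  set S : Finset (Fin s × Fin t) :=
    Finset.univ.filter (fun p : Fin s × Fin t => Mb p.1 p.2 = 1 ∧ β < U p.1 * V p.2) with hS
  set R : Finset (Fin s) := S.image Prod.fst with hR
  set Cc : Finset (Fin t) := S.image Prod.snd with hCc
  have hbicRC : IsBiclique Mb R Cc := by
    intro i hi j hj
    obtain ⟨p1, hp1, hp1e⟩ := Finset.mem_image.1 hi
    obtain ⟨p2, hp2, hp2e⟩ := Finset.mem_image.1 hj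
    rw [hS, Finset.mem_filter] at hp1 hp2
    have hp1b : β < U i * V p1.2 := by rw [← hp1e]; exact hp1.2.2
    have hp2b : β < U p2.1 * V j := by rw [← hp2e]; exact hp2.2.2
    rcases hMb i j with h0 | h1
    · exfalso
      have hz := h_zero i j h0
      have hprod : β * β < |U p2.1 * V p1.2| * |U i * V j| := by
        have hiden : |(U p2.1 * V p1.2) * (U i * V j)| = |(U p2.1 * V j) * (U i * V p1.2)| := by
          congr 1; ring
        rw [← abs_mul, hiden, abs_mul]
        exact mul_lt_mul'' (lt_of_lt_of_le hp2b (le_abs_self _))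
          (lt_of_lt_of_le hp1b (le_abs_self _)) hβ0.le hβ0.le
      have hgt : 2 * q < |U p2.1 * V p1.2| := by
        have h7 : |U p2.1 * V p1.2| * |U i * V j| ≤ |U p2.1 * V p1.2| * γ :=
          mul_le_mul_of_nonneg_left hz (abs_nonneg _)
        have h8 : β * β = 2 * q * γ := by rw [← hβsq]; ring
        have h9 : 2 * q * γ < |U p2.1 * V p1.2| * γ := by linarith
        exact lt_of_mul_lt_mul_right h9 hγ0.le
      rcases hMb p2.1 p1.2 with h00 | h11
      · have h10 := h_zero p2.1 p1.2 h00
        linarith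
      · have h10 := h_one p2.1 p1.2 h11
        linarith
    · exact h1
  -- cardinality bound
  have hScard : (S.card : ℝ) ≤ (Estar : ℝ) := by
    have h1 : S ⊆ R ×ˢ Cc := fun p hp =>
      Finset.mem_product.2 ⟨Finset.mem_image_of_mem _ hp, Finset.mem_image_of_mem _ hp⟩
    have h2 : S.card ≤ Estar := by
      calc S.card ≤ (R ×ˢ Cc).card := Finset.card_le_card h1
        _ = R.card * Cc.card := Finset.card_product R Cc
        _ ≤ Estar := hEstar_max R Cc hbicRC
    exact_mod_cast h2
  -- lower bound the top-left sum
  set O : Finset (Fin s × Fin t) :=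
    Finset.univ.filter (fun p : Fin s × Fin t => Mb p.1 p.2 = 1) with hO
  have hAsum : A = ∑ p : Fin s × Fin t, (Mb p.1 p.2 - U p.1 * V p.2) ^ 2 := by
    rw [hA, ← Fintype.sum_prod_type']
  have hstep : ∑ p ∈ O \ S, (Mb p.1 p.2 - U p.1 * V p.2) ^ 2 ≤ A := by
    rw [hAsum]
    exact Finset.sum_le_sum_of_subset_of_nonneg (Finset.subset_univ _)
      (fun p _ _ => sq_nonneg _)
  have hterm_lb : ∀ p ∈ O \ S, (1 - 2 * β) ≤ (Mb p.1 p.2 - U p.1 * V p.2) ^ 2 := by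
    intro p hp
    rw [Finset.mem_sdiff, hO, hS, Finset.mem_filter, Finset.mem_filter] at hp
    obtain ⟨⟨-, h1⟩, h2⟩ := hp
    have h3 : U p.1 * V p.2 ≤ β := by
      by_contra hc
      exact h2 ⟨Finset.mem_univ p, h1, lt_of_not_ge hc⟩
    rw [h1]
    nlinarith [sq_nonneg (U p.1 * V p.2)]
  have hsum_lb : ((O \ S).card : ℝ) * (1 - 2 * β)
      ≤ ∑ p ∈ O \ S, (Mb p.1 p.2 - U p.1 * V p.2) ^ 2 := by
    have := Finset.card_nsmul_le_sum (O \ S)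
      (fun p => (Mb p.1 p.2 - U p.1 * V p.2) ^ 2) (1 - 2 * β) hterm_lb
    simpa [nsmul_eq_mul] using this
  have hcard2 : (O.card : ℝ) - (Estar : ℝ) ≤ ((O \ S).card : ℝ) := by
    have h1 : O.card ≤ (O \ S).card + S.card := Finset.card_le_card_sdiff_add_card
    have h1' : (O.card : ℝ) ≤ ((O \ S).card : ℝ) + (S.card : ℝ) := by exact_mod_cast h1
    linarith
  have hbeta : 0 ≤ 1 - 2 * β := by linarith
  calc ((O.card : ℝ) - (Estar : ℝ)) * (1 - 2 * β)
      ≤ ((O \ S).card : ℝ) * (1 - 2 * β) := mul_le_mul_of_nonneg_right hcard2 hbeta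
    _ ≤ ∑ p ∈ O \ S, (Mb p.1 p.2 - U p.1 * V p.2) ^ 2 := hsum_lb
    _ ≤ A := hstep
    _ ≤ A + B + C + Dg := by linarith

theorem stmt_15 {s t Z : ℕ} (Mb : Matrix (Fin s) (Fin t) ℝ)
    (hMb : ∀ i j, Mb i j = 0 ∨ Mb i j = 1)
    (e : Fin Z → Fin s × Fin t) (he_inj : Function.Injective e)
    (he_enum : ∀ p : Fin s × Fin t, Mb p.1 p.2 = 0 ↔ p ∈ Set.range e)
    (E : ℝ) (hE : E = ∑ i, ∑ j, Mb i j) (hE1 : 1 ≤ E)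
    (Estar : ℕ)
    (hEstar_ex : ∃ (I : Finset (Fin s)) (J : Finset (Fin t)),
      IsBiclique Mb I J ∧ I.card * J.card = Estar)
    (hEstar_max : ∀ (I : Finset (Fin s)) (J : Finset (Fin t)),
      IsBiclique Mb I J → I.card * J.card ≤ Estar)
    (ε : ℝ) (hε0 : 0 < ε) (hε1 : ε ≤ 1)
    (d : ℝ) (hd : 8 * E ^ ((7 : ℝ) / 2) / ε ^ 2 + E ^ ((1 : ℝ) / 2) < d) :
    E - Estar - ε <
        sInf {x : ℝ | ∃ (u : Fin s ⊕ Fin Z → ℝ) (v : Fin t ⊕ Fin Z → ℝ),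
          x = ∑ i, ∑ j, mdW e i j * (mdM Mb d i j - u i * v j) ^ 2} ∧
      sInf {x : ℝ | ∃ (u : Fin s ⊕ Fin Z → ℝ) (v : Fin t ⊕ Fin Z → ℝ),
          x = ∑ i, ∑ j, mdW e i j * (mdM Mb d i j - u i * v j) ^ 2} ≤
        E - Estar := by
  -- basic quantities
  have hE0 : (0:ℝ) ≤ E := le_trans zero_le_one hE1
  set q : ℝ := Real.sqrt E with hqdef
  have hq2 : q ^ 2 = E := Real.sq_sqrt hE0
  have hq1 : 1 ≤ q := by nlinarith [Real.sqrt_nonneg E]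
  have hq0 : 0 < q := by linarith
  -- rpow conversions
  have hrpow1 : E ^ ((1 : ℝ) / 2) = q := by
    rw [hqdef, Real.sqrt_eq_rpow]
  have hrpow7 : E ^ ((7 : ℝ) / 2) = q ^ 7 := by
    have h1 : E ^ ((7 : ℝ) / 2) = (E ^ ((1:ℝ)/2)) ^ (7 : ℕ) := by
      rw [← Real.rpow_natCast (E ^ ((1:ℝ)/2)) 7, ← Real.rpow_mul hE0]
      norm_num
    rw [h1, hrpow1]
  rw [hrpow1, hrpow7] at hd
  have hdq : q < d := by
    have : 0 < 8 * q ^ 7 / ε ^ 2 := by positivity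
    linarith
  have hDpos : (0:ℝ) < d - q := by linarith
  have hεD : 8 * q ^ 7 < ε ^ 2 * (d - q) := by
    have h1 : 8 * q ^ 7 / ε ^ 2 < d - q := by linarith
    rw [div_lt_iff₀ (by positivity)] at h1
    linarith [h1]
  set γ : ℝ := q ^ 2 / (d - q) with hγdef
  have hγ0 : 0 < γ := div_pos (by positivity) hDpos
  have hq27 : q ^ 2 ≤ q ^ 7 := pow_le_pow_right₀ hq1 (by norm_num)
  have hε2 : ε ^ 2 ≤ 1 := by nlinarith
  have hγ1 : γ < 1 := by
    rw [hγdef, div_lt_one hDpos]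
    nlinarith [mul_nonneg (sub_nonneg.2 hε2) hDpos.le]
  set β : ℝ := Real.sqrt (2 * q * γ) with hβdef
  have hβsq : β ^ 2 = 2 * q * γ := Real.sq_sqrt (by positivity)
  have hβ0 : 0 < β := Real.sqrt_pos.2 (by positivity)
  have hβlt : β * (2 * q ^ 2) < ε := by
    have h1 : (β * (2 * q ^ 2)) ^ 2 = 8 * q ^ 7 / (d - q) := by
      rw [mul_pow, hβsq, hγdef]
      field_simp
      ring
    have h2 : (β * (2 * q ^ 2)) ^ 2 < ε ^ 2 := by
      rw [h1, div_lt_iff₀ hDpos]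
      linarith
    exact lt_of_pow_lt_pow_left₀ 2 hε0.le h2
  have hq21 : 1 ≤ q ^ 2 := by nlinarith
  have hβhalf : β ≤ 1 / 2 := by
    nlinarith [mul_nonneg hβ0.le (sub_nonneg.2 hq21)]
  -- the ones count
  set O : Finset (Fin s × Fin t) :=
    Finset.univ.filter (fun p : Fin s × Fin t => Mb p.1 p.2 = 1) with hO
  have hOcard : ((O.card : ℝ)) = E := by
    have hpt : ∀ p : Fin s × Fin t, Mb p.1 p.2 = if Mb p.1 p.2 = 1 then (1:ℝ) else 0 :=
      fun p => by rcases hMb p.1 p.2 with h | h <;> simp [h]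
    calc ((O.card : ℝ)) = ∑ _p ∈ O, (1:ℝ) := by simp
      _ = ∑ p : Fin s × Fin t, if Mb p.1 p.2 = 1 then (1:ℝ) else 0 := by
          rw [hO, Finset.sum_filter]
      _ = ∑ p : Fin s × Fin t, Mb p.1 p.2 := Finset.sum_congr rfl fun p _ => (hpt p).symm
      _ = ∑ i, ∑ j, Mb i j := Fintype.sum_prod_type' _
      _ = E := hE.symm
  have hEstarE : (Estar : ℝ) ≤ E := by
    obtain ⟨I, J, hbic, hcard⟩ := hEstar_ex
    have hsub : I ×ˢ J ⊆ O := by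
      intro p hp
      rw [Finset.mem_product] at hp
      rw [hO, Finset.mem_filter]
      exact ⟨Finset.mem_univ p, hbic p.1 hp.1 p.2 hp.2⟩
    have h1 : Estar ≤ O.card := by
      calc Estar = I.card * J.card := hcard.symm
        _ = (I ×ˢ J).card := (Finset.card_product I J).symm
        _ ≤ O.card := Finset.card_le_card hsub
    rw [← hOcard]
    exact_mod_cast h1
  set Sset : Set ℝ := {x : ℝ | ∃ (u : Fin s ⊕ Fin Z → ℝ) (v : Fin t ⊕ Fin Z → ℝ),
      x = ∑ i, ∑ j, mdW e i j * (mdM Mb d i j - u i * v j) ^ 2} with hSset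
  have hne : Sset.Nonempty :=
    ⟨∑ i, ∑ j, mdW e i j * (mdM Mb d i j - (0 : Fin s ⊕ Fin Z → ℝ) i *
        (0 : Fin t ⊕ Fin Z → ℝ) j) ^ 2, 0, 0, rfl⟩
  have hbdd : BddBelow Sset := by
    refine ⟨0, ?_⟩
    rintro x ⟨u, v, rfl⟩
    rw [decomp]
    positivity
  constructor
  · -- lower bound
    have hlb : ∀ x ∈ Sset, min E ((E - (Estar:ℝ)) * (1 - 2 * β)) ≤ x := by
      rintro x ⟨u, v, rfl⟩
      rw [decomp]
      by_cases hcase : (∑ i, ∑ j, (Mb i j - u (Sum.inl i) * v (Sum.inl j)) ^ 2)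
          + (∑ k, (u (Sum.inl (e k).1) * v (Sum.inr k)) ^ 2)
          + (∑ k, (u (Sum.inr k) * v (Sum.inl (e k).2)) ^ 2)
          + (∑ k, (d - u (Sum.inr k) * v (Sum.inr k)) ^ 2) < q ^ 2
      · have hk := key Mb hMb e he_enum Estar hEstar_max q γ β d hq1 hdq hγdef hγ1
          hβ0 hβsq hβhalf u v hcase
        rw [hOcard] at hk
        exact le_trans (min_le_right _ _) hk
      · push_neg at hcase
        exact le_trans (min_le_left _ _) (hq2 ▸ hcase)
    have h1 : min E ((E - (Estar:ℝ)) * (1 - 2 * β)) ≤ sInf Sset := le_csInf hne hlb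
    have h2 : E - (Estar:ℝ) - ε < min E ((E - (Estar:ℝ)) * (1 - 2 * β)) := by
      apply lt_min
      · have : (0:ℝ) ≤ (Estar:ℝ) := Nat.cast_nonneg _
        linarith
      · nlinarith [mul_nonneg hβ0.le (show (0:ℝ) ≤ (Estar:ℝ) from Nat.cast_nonneg _),
          mul_nonneg hβ0.le (sub_nonneg.2 hEstarE)]
    linarith
  · -- upper bound
    apply le_of_forall_pos_le_add
    intro η hη
    obtain ⟨I, J, hbic, hcard⟩ := hEstar_ex
    have hz : ∀ k, Mb (e k).1 (e k).2 = 0 := fun k => (he_enum (e k)).2 ⟨k, rfl⟩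
    obtain ⟨u, v, huv⟩ := mdConstruct Mb hMb e hz I J hbic d η hη
    apply csInf_le_of_le hbdd ⟨u, v, rfl⟩
    rw [decomp]
    have hcardR : (I.card : ℝ) * (J.card : ℝ) = (Estar : ℝ) := by exact_mod_cast hcard
    calc _ ≤ ((∑ i, ∑ j, Mb i j) - I.card * J.card) + η := huv
      _ = E - (Estar:ℝ) + η := by rw [← hE, hcardR]
end
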